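/- Let f : S ⇒ T be a simulation between automata with boundary S, T : X → Y with initial states. If v is a deadlock state of S reachable from the initial state of S, then f(v) is a deadlock state of T reachable from the initial state of T. -/

import Mathlib

/-- An automaton with boundary `S : X → Y`, where the action sets `X`, `Y`
have trivial (reflexive) actions `eX`, `eY`. -/
structure Aut (X Y : Type) (eX : X) (eY : Y) where
  State : Type
  Motion : Type
  src : Motion → State
  tgt : Motion → State
  refl : State → Motion
  refl_src : ∀ v, src (refl v) = v
  refl_tgt : ∀ v, tgt (refl v) = v
  labL : Motion → X
  labR : Motion → Y
  labL_refl : ∀ v, labL (refl v) = eX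
  labR_refl : ∀ v, labR (refl v) = eY

namespace Aut

variable {X Y Z W : Type} {eX : X} {eY : Y} {eZ : Z} {eW : W}

/-- The binding `S·T` of automata `S : X → Y` and `T : Y → Z`. -/
def bind (S : Aut X Y eX eY) (T : Aut Y Z eY eZ) : Aut X Z eX eZ where
  State := S.State × T.State
  Motion := {p : S.Motion × T.Motion // S.labR p.1 = T.labL p.2}
  src p := (S.src p.val.1, T.src p.val.2)
  tgt p := (S.tgt p.val.1, T.tgt p.val.2)
  refl v := ⟨(S.refl v.1, T.refl v.2), by rw [S.labR_refl, T.labL_refl]⟩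
  refl_src v := by simp [S.refl_src, T.refl_src]
  refl_tgt v := by simp [S.refl_tgt, T.refl_tgt]
  labL p := S.labL p.val.1
  labR p := T.labR p.val.2
  labL_refl v := S.labL_refl v.1
  labR_refl v := T.labR_refl v.2

/-- The product `S×T` of automata `S : X → Y` and `T : Z → W`. -/
def prod (S : Aut X Y eX eY) (T : Aut Z W eZ eW) :
    Aut (X × Z) (Y × W) (eX, eZ) (eY, eW) where
  State := S.State × T.State
  Motion := S.Motion × T.Motion
  src p := (S.src p.1, T.src p.2)
  tgt p := (S.tgt p.1, T.tgt p.2)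
  refl v := (S.refl v.1, T.refl v.2)
  refl_src v := by simp [S.refl_src, T.refl_src]
  refl_tgt v := by simp [S.refl_tgt, T.refl_tgt]
  labL p := (S.labL p.1, T.labL p.2)
  labR p := (S.labR p.1, T.labR p.2)
  labL_refl v := by simp [S.labL_refl, T.labL_refl]
  labR_refl v := by simp [S.labR_refl, T.labR_refl]

/-- The feedback `fb_Y S` of an automaton `S : X×Y → Y×Z`. -/
def fb (S : Aut (X × Y) (Y × Z) (eX, eY) (eY, eZ)) : Aut X Z eX eZ where
  State := S.State
  Motion := {e : S.Motion // (S.labL e).2 = (S.labR e).1}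
  src e := S.src e.val
  tgt e := S.tgt e.val
  refl v := ⟨S.refl v, by rw [S.labL_refl, S.labR_refl]⟩
  refl_src v := S.refl_src v
  refl_tgt v := S.refl_tgt v
  labL e := (S.labL e.val).1
  labR e := (S.labR e.val).2
  labL_refl v := by simp [S.labL_refl]
  labR_refl v := by simp [S.labR_refl]

/-- The identity automaton on an action set `X`. -/
def ident (X : Type) (eX : X) : Aut X X eX eX where
  State := PUnit
  Motion := X
  src _ := PUnit.unit
  tgt _ := PUnit.unit
  refl _ := eX
  refl_src _ := rfl
  refl_tgt _ := rfl
  labL x := x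
  labR x := x
  labL_refl _ := rfl
  labR_refl _ := rfl

end Aut

/-- `IsPath A v l w` : the list of motions `l` is a finite behaviour of `A`
from the state `v` ending at the state `w`. -/
def IsPath {X Y : Type} {eX : X} {eY : Y} (A : Aut X Y eX eY) :
    A.State → List A.Motion → A.State → Prop
  | v, [], w => v = w
  | v, e :: l, w => A.src e = v ∧ IsPath A (A.tgt e) l w

/-- `w` is reachable from `v`: there is a finite (possibly empty) behaviour from `v` to `w`. -/
def Reaches {X Y : Type} {eX : X} {eY : Y} (A : Aut X Y eX eY) (v w : A.State) : Prop :=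
  ∃ l, IsPath A v l w

/-- A state is a deadlock if the only motion out of it is the reflexive motion. -/
def Deadlock {X Y : Type} {eX : X} {eY : Y} (A : Aut X Y eX eY) (v : A.State) : Prop :=
  ∀ e, A.src e = v → e = A.refl v

/-- A behaviour (finite or infinite) of `A` from the state `v0`, encoded as a
finite-or-infinite sequence `Stream'.Seq` of motions. -/
def IsBehaviour {X Y : Type} {eX : X} {eY : Y} (A : Aut X Y eX eY) (v0 : A.State)
    (s : Stream'.Seq A.Motion) : Prop :=
  (∀ e, s.get? 0 = some e → A.src e = v0) ∧
  (∀ k e f, s.get? k = some e → s.get? (k + 1) = some f → A.src f = A.tgt e)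

/-- A comparison of automata: maps on states and motions preserving sources,
targets, reflexive motions and boundary labels. -/
structure Comparison {X Y : Type} {eX : X} {eY : Y} (S T : Aut X Y eX eY) where
  onState : S.State → T.State
  onMotion : S.Motion → T.Motion
  src_eq : ∀ e, T.src (onMotion e) = onState (S.src e)
  tgt_eq : ∀ e, T.tgt (onMotion e) = onState (S.tgt e)
  refl_eq : ∀ v, onMotion (S.refl v) = T.refl (onState v)
  labL_eq : ∀ e, T.labL (onMotion e) = S.labL e
  labR_eq : ∀ e, T.labR (onMotion e) = S.labR e

/-- An isomorphism of automata: bijections on states and motions preserving sources,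
targets, reflexive motions and boundary labels. -/
structure AutIso {X Y : Type} {eX : X} {eY : Y} (S T : Aut X Y eX eY) where
  stateEquiv : S.State ≃ T.State
  motionEquiv : S.Motion ≃ T.Motion
  src_eq : ∀ e, T.src (motionEquiv e) = stateEquiv (S.src e)
  tgt_eq : ∀ e, T.tgt (motionEquiv e) = stateEquiv (S.tgt e)
  refl_eq : ∀ v, motionEquiv (S.refl v) = T.refl (stateEquiv v)
  labL_eq : ∀ e, T.labL (motionEquiv e) = S.labL e
  labR_eq : ∀ e, T.labR (motionEquiv e) = S.labR e

/-- The reachable subautomaton `r(A)` of `A` with initial state `v0`. -/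
def reach {X Y : Type} {eX : X} {eY : Y} (A : Aut X Y eX eY) (v0 : A.State) :
    Aut X Y eX eY where
  State := {v : A.State // Reaches A v0 v}
  Motion := {e : A.Motion // Reaches A v0 (A.src e) ∧ Reaches A v0 (A.tgt e)}
  src e := ⟨A.src e.val, e.property.1⟩
  tgt e := ⟨A.tgt e.val, e.property.2⟩
  refl v := ⟨A.refl v.val, by rw [A.refl_src, A.refl_tgt]; exact ⟨v.property, v.property⟩⟩
  refl_src v := Subtype.ext (A.refl_src v.val)
  refl_tgt v := Subtype.ext (A.refl_tgt v.val)
  labL e := A.labL e.val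
  labR e := A.labR e.val
  labL_refl v := A.labL_refl v.val
  labR_refl v := A.labR_refl v.val

/-- The initial state of `A`, as a state of the reachable subautomaton `r(A)`. -/
def reachInit {X Y : Type} {eX : X} {eY : Y} (A : Aut X Y eX eY) (v0 : A.State) :
    (reach A v0).State :=
  ⟨v0, ⟨[], rfl⟩⟩

/-- A simulation `S ⇒ T` of automata with initial states: a comparison
`r(S) → r(T)` preserving the initial state and satisfying the lifting property. -/
structure Simulation {X Y : Type} {eX : X} {eY : Y} (S T : Aut X Y eX eY)
    (v0 : S.State) (w0 : T.State) where
  comp : Comparison (reach S v0) (reach T w0)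
  init : (comp.onState (reachInit S v0)).val = w0
  lift : ∀ (v : (reach S v0).State) (e : (reach T w0).Motion),
      (reach T w0).src e = comp.onState v →
      ∃ (l : List ((reach S v0).Motion)) (e' : (reach S v0).Motion)
        (v' : (reach S v0).State),
        IsPath (reach S v0) v (l ++ [e']) v' ∧
        (∀ m ∈ l, comp.onMotion m = (reach T w0).refl (comp.onState v)) ∧
        comp.onMotion e' = e

theorem isPath_append {X Y : Type} {eX : X} {eY : Y} (A : Aut X Y eX eY) :
    ∀ (l : List A.Motion) (l' : List A.Motion) (u w x : A.State),
    IsPath A u l w → IsPath A w l' x → IsPath A u (l ++ l') x := by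
  intro l
  induction l with
  | nil => intro l' u w x h h'; cases h; exact h'
  | cons e t ih =>
    intro l' u w x h h'
    exact ⟨h.1, ih l' _ w x h.2 h'⟩

theorem reaches_tgt {X Y : Type} {eX : X} {eY : Y} (A : Aut X Y eX eY)
    (v0 : A.State) (e : A.Motion) (h : Reaches A v0 (A.src e)) :
    Reaches A v0 (A.tgt e) := by
  obtain ⟨l, hl⟩ := h
  exact ⟨l ++ [e], isPath_append A l [e] v0 (A.src e) (A.tgt e) hl ⟨rfl, rfl⟩⟩

theorem deadlock_path {X Y : Type} {eX : X} {eY : Y} (S : Aut X Y eX eY)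
    (v0 : S.State) (v : S.State) (hr : Reaches S v0 v) (hdead : Deadlock S v) :
    ∀ (l : List ((reach S v0).Motion)) (v' : (reach S v0).State),
      IsPath (reach S v0) ⟨v, hr⟩ l v' →
      ∀ m ∈ l, m = (reach S v0).refl ⟨v, hr⟩ := by
  intro l
  induction l with
  | nil => intro v' _ m hm; cases hm
  | cons e t ih =>
    intro v' h m hm
    have hsrc : S.src e.val = v := congrArg Subtype.val h.1
    have heval : e.val = S.refl v := hdead e.val hsrc
    have he : e = (reach S v0).refl ⟨v, hr⟩ := Subtype.ext heval
    rcases List.mem_cons.mp hm with hm | hm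
    · rw [hm]; exact he
    · have htgt : (reach S v0).tgt e = ⟨v, hr⟩ := by
        apply Subtype.ext
        show S.tgt e.val = v
        rw [heval, S.refl_tgt]
      exact ih v' (htgt ▸ h.2) m hm

/-- A simulation `f : S ⇒ T` sends reachable deadlocks of `S` to reachable
deadlocks of `T`. -/
theorem simulation_preserves_deadlock {X Y : Type} {eX : X} {eY : Y}
    (S T : Aut X Y eX eY) (v0 : S.State) (w0 : T.State)
    (f : Simulation S T v0 w0)
    (v : S.State) (hreach : Reaches S v0 v) (hdead : Deadlock S v) :
    Deadlock T (f.comp.onState ⟨v, hreach⟩).val ∧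
    Reaches T w0 (f.comp.onState ⟨v, hreach⟩).val := by
  set fv := f.comp.onState ⟨v, hreach⟩ with hfv
  refine ⟨?_, fv.property⟩
  intro e hsrc
  -- e is a motion of reach T w0
  have hsrcreach : Reaches T w0 (T.src e) := hsrc ▸ fv.property
  have htgtreach : Reaches T w0 (T.tgt e) := reaches_tgt T w0 e hsrcreach
  let e' : (reach T w0).Motion := ⟨e, hsrcreach, htgtreach⟩
  have hsrce' : (reach T w0).src e' = fv := Subtype.ext hsrc
  obtain ⟨l, m, v', hpath, _, hmap⟩ := f.lift ⟨v, hreach⟩ e' hsrce'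
  have hall := deadlock_path S v0 v hreach hdead (l ++ [m]) v' hpath
  have hm : m = (reach S v0).refl ⟨v, hreach⟩ :=
    hall m (List.mem_append_right l (List.mem_singleton_self m))
  have : f.comp.onMotion m = (reach T w0).refl fv := by
    rw [hm]; exact f.comp.refl_eq _
  rw [hmap] at this
  have : e'.val = ((reach T w0).refl fv).val := congrArg Subtype.val this
  exact this
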